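/- q-deformed SSS congruence: let q > 0 and let z₁, z₂, z₁′, z₂′ ∈ U with φ(z₁) ≤ φ(z₂) and φ(z₁′) ≤ φ(z₂′). If ℓ_q(z₁) = ℓ_q(z₁′), ℓ_q(z₂) = ℓ_q(z₂′), and ℓ_q(z₁ + z₂) = ℓ_q(z₁′ + z₂′), then z₂ · z₁′ = z₂′ · z₁ (equivalently z₂/z₁ = z₂′/z₁′, so the triangles with vertices (0, z₁, z₁ + z₂) and (0, z₁′, z₁′ + z₂′) are related by the spiral similarity sending z₁ to z₁′). -/

import Mathlib

/-- Membership in U = { z : Im z > 0 } ∪ { z real, z > 0 }. -/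
def InUpperU (z : ℂ) : Prop := 0 < z.im ∨ (z.im = 0 ∧ 0 < z.re)

/-- The phase φ(z) = Arg(z)/π of a complex number. -/
noncomputable def phase (z : ℂ) : ℝ := z.arg / Real.pi

/-- The q-deformed length ℓ_q(z) = q^{φ(z)} · |z|. -/
noncomputable def qLen (q : ℝ) (z : ℂ) : ℝ := q ^ phase z * ‖z‖

namespace QSSSAux

open Set

/-- auxiliary log-length -/
noncomputable def L (q : ℝ) (z : ℂ) : ℝ :=
  Real.log ‖z‖ + Real.log q / Real.pi * z.arg

lemma angle_eq_real {x y : ℝ} (h : (x : Real.Angle) = (y : Real.Angle))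
    (hb : |x - y| < 2 * Real.pi) : x = y := by
  obtain ⟨k, hk⟩ := Real.Angle.angle_eq_iff_two_pi_dvd_sub.mp h
  have hπ := Real.pi_pos
  have h1 : |(k : ℝ)| < 1 := by
    by_contra hk1
    push_neg at hk1
    have h2 : 2 * Real.pi ≤ |2 * Real.pi * (k : ℝ)| := by
      rw [abs_mul, abs_of_pos (by linarith : (0:ℝ) < 2 * Real.pi)]
      nlinarith
    rw [← hk] at h2; linarith
  have hk0 : k = 0 := by
    have h2 := abs_lt.mp h1
    have h3l : -1 < k := by exact_mod_cast h2.1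
    have h3r : k < 1 := by exact_mod_cast h2.2
    omega
  rw [hk0] at hk
  push_cast at hk
  linarith

lemma mem_arg {z : ℂ} (h : InUpperU z) : 0 ≤ z.arg ∧ z.arg < Real.pi ∧ z ≠ 0 := by
  have hne : z ≠ 0 := by
    rcases h with h | ⟨h1, h2⟩
    · exact fun hz => by simp [hz] at h
    · exact fun hz => by simp [hz] at h2
  refine ⟨Complex.arg_nonneg_iff.mpr ?_, ?_, hne⟩
  · rcases h with h | ⟨h1, _⟩
    · exact le_of_lt h
    · exact le_of_eq h1.symm
  · rcases lt_or_eq_of_le (Complex.arg_le_pi z) with h' | h'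
    · exact h'
    · exfalso
      rcases Complex.arg_eq_pi_iff.mp h' with ⟨hre, him⟩
      rcases h with h | ⟨h1, h2⟩
      · rw [him] at h; linarith
      · linarith

lemma inU_of_arg {z : ℂ} (hne : z ≠ 0) (h0 : 0 ≤ z.arg) (hπ : z.arg < Real.pi) :
    InUpperU z := by
  have him : 0 ≤ z.im := Complex.arg_nonneg_iff.mp h0
  rcases eq_or_lt_of_le him with h | h
  · right
    refine ⟨h.symm, ?_⟩
    rcases lt_trichotomy z.re 0 with hr | hr | hr
    · exact absurd (Complex.arg_eq_pi_iff.mpr ⟨hr, h.symm⟩) (ne_of_lt hπ)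
    · exact absurd (Complex.ext (by simpa using hr) (by simpa using h.symm)) hne
    · exact hr
  · left; exact h

lemma inU_add {a b : ℂ} (ha : InUpperU a) (hb : InUpperU b) : InUpperU (a + b) := by
  simp only [InUpperU, Complex.add_im, Complex.add_re] at *
  rcases ha with h | ⟨h1, h2⟩ <;> rcases hb with h' | ⟨h1', h2'⟩
  · left; linarith
  · left; linarith
  · left; linarith
  · right; constructor <;> linarith

lemma inU_one : InUpperU 1 := Or.inr ⟨by simp, by simp⟩

lemma qLen_eq_exp {q : ℝ} (hq : 0 < q) {z : ℂ} (hz : z ≠ 0) :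
    qLen q z = Real.exp (L q z) := by
  unfold qLen phase L
  rw [Real.exp_add, Real.exp_log (norm_pos_iff.mpr hz), Real.rpow_def_of_pos hq, mul_comm]
  congr 1
  exact congrArg Real.exp (by ring)

lemma L_mul {q : ℝ} {a b : ℂ} (ha : a ≠ 0) (hb : b ≠ 0)
    (h : (a * b).arg = a.arg + b.arg) : L q (a * b) = L q a + L q b := by
  unfold L
  rw [norm_mul, Real.log_mul (norm_ne_zero_iff.mpr ha) (norm_ne_zero_iff.mpr hb), h]
  ring

lemma arg_mul_of {a b : ℂ} (ha : a ≠ 0) (hb : b ≠ 0)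
    (ha0 : 0 ≤ a.arg) (haπ : a.arg < Real.pi) (hb0 : 0 ≤ b.arg) (hbπ : b.arg < Real.pi)
    (hab0 : 0 ≤ (a * b).arg) (habπ : (a * b).arg < Real.pi) :
    (a * b).arg = a.arg + b.arg := by
  have h := Complex.arg_mul_coe_angle ha hb
  rw [← Real.Angle.coe_add] at h
  refine angle_eq_real h ?_
  have hπ := Real.pi_pos
  rw [abs_lt]; constructor <;> linarith

lemma arg_div_of {a b : ℂ} (ha : a ≠ 0) (hb : b ≠ 0)
    (h1 : 0 ≤ a.arg - b.arg) (h2 : a.arg - b.arg < Real.pi) :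
    (a / b).arg = a.arg - b.arg := by
  have h := Complex.arg_div_coe_angle ha hb
  rw [← Real.Angle.coe_sub] at h
  refine angle_eq_real h ?_
  have hπ := Real.pi_pos
  have g1 := Complex.arg_le_pi (a / b)
  have g2 := Complex.neg_pi_lt_arg (a / b)
  rw [abs_lt]; constructor <;> linarith

/-- The key analytic lemma: along the spiral of constant q-length, the q-length of
`1 + w` is strictly decreasing in the phase. -/
lemma core (α d : ℝ) :
    StrictAntiOn (fun θ : ℝ =>
      ((1 - Complex.I * (α : ℂ)) *
        Complex.log (1 + Complex.exp ((d : ℂ) + (Complex.I - (α : ℂ)) * (θ : ℂ)))).re)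
      (Set.Ico 0 Real.pi) := by
  set W : ℝ → ℂ := fun θ => Complex.exp ((d : ℂ) + (Complex.I - (α : ℂ)) * (θ : ℂ)) with hW
  have hre : ∀ θ : ℝ, ((d : ℂ) + (Complex.I - (α : ℂ)) * (θ : ℂ)).re = d - α * θ := by
    intro θ; simp [Complex.add_re, Complex.mul_re]; ring
  have him : ∀ θ : ℝ, ((d : ℂ) + (Complex.I - (α : ℂ)) * (θ : ℂ)).im = θ := by
    intro θ; simp [Complex.add_im, Complex.mul_im]
  have hWim : ∀ θ : ℝ, (W θ).im = Real.exp (d - α * θ) * Real.sin θ := by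
    intro θ; rw [hW]; simp only [Complex.exp_im, hre, him]
  have hWre : ∀ θ : ℝ, (W θ).re = Real.exp (d - α * θ) * Real.cos θ := by
    intro θ; rw [hW]; simp only [Complex.exp_re, hre, him]
  have hslit : ∀ θ ∈ Set.Ico 0 Real.pi, (1 + W θ) ∈ Complex.slitPlane := by
    intro θ ⟨h0, hπ⟩
    rcases eq_or_lt_of_le h0 with h | h
    · left
      have : (1 + W θ).re = 1 + Real.exp (d - α * θ) * Real.cos θ := by
        simp [Complex.add_re, hWre]
      rw [this, ← h]
      simp [Real.exp_pos]
      positivity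
    · right
      have : (1 + W θ).im = Real.exp (d - α * θ) * Real.sin θ := by
        simp [Complex.add_im, hWim]
      rw [this]
      exact ne_of_gt (mul_pos (Real.exp_pos _) (Real.sin_pos_of_pos_of_lt_pi h hπ))
  apply strictAntiOn_of_deriv_neg (convex_Ico 0 Real.pi)
  · -- continuity
    have hWc : Continuous W := by
      rw [hW]
      exact Complex.continuous_exp.comp
        (continuous_const.add (continuous_const.mul Complex.continuous_ofReal))
    have h1 : ContinuousOn (fun θ : ℝ => (1 : ℂ) + W θ) (Set.Ico 0 Real.pi) :=
      (continuous_const.add hWc).continuousOn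
    have h2 := h1.clog hslit
    exact Complex.continuous_re.comp_continuousOn (continuousOn_const.mul h2)
  · intro x hx
    rw [interior_Ico] at hx
    obtain ⟨hx0, hxπ⟩ := hx
    have hd1 : HasDerivAt (fun θ : ℝ => ((d : ℂ) + (Complex.I - (α : ℂ)) * (θ : ℂ)))
        (Complex.I - (α : ℂ)) x := by
      have h0 : HasDerivAt (fun θ : ℝ => (θ : ℂ)) 1 x := by
        simpa using (hasDerivAt_id x).ofReal_comp
      simpa using (h0.const_mul (Complex.I - (α : ℂ))).const_add (d : ℂ)
    have hWd : HasDerivAt W ((Complex.I - (α : ℂ)) * W x) x := by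
      rw [hW]
      simpa [mul_comm] using hd1.cexp
    have hu : HasDerivAt (fun θ : ℝ => (1 : ℂ) + W θ)
        ((Complex.I - (α : ℂ)) * W x) x := hWd.const_add 1
    have hs : (1 : ℂ) + W x ∈ Complex.slitPlane := hslit x ⟨le_of_lt hx0, hxπ⟩
    have hune : (1 : ℂ) + W x ≠ 0 := Complex.slitPlane_ne_zero hs
    have hlog := hu.clog_real hs
    have hF := hlog.const_mul (1 - Complex.I * (α : ℂ))
    have hG : HasDerivAt
        (fun θ : ℝ => ((1 - Complex.I * (α : ℂ)) * Complex.log (1 + W θ)).re)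
        (((1 - Complex.I * (α : ℂ)) *
          ((Complex.I - (α : ℂ)) * W x / (1 + W x))).re) x := by
      have h := Complex.reCLM.hasFDerivAt.comp_hasDerivAt x hF
      simpa only [Function.comp_def, Complex.reCLM_apply] using h
    have hderiv : deriv (fun θ : ℝ =>
        ((1 - Complex.I * (α : ℂ)) * Complex.log (1 + Complex.exp ((d : ℂ) +
          (Complex.I - (α : ℂ)) * (θ : ℂ)))).re) x =
        ((1 - Complex.I * (α : ℂ)) *
          ((Complex.I - (α : ℂ)) * W x / (1 + W x))).re := hG.deriv
    rw [hderiv]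
    have key : (1 - Complex.I * (α : ℂ)) * ((Complex.I - (α : ℂ)) * W x / (1 + W x)) =
        Complex.I * ((1 + α ^ 2 : ℝ) : ℂ) * (W x / (1 + W x)) := by
      have hc : (1 - Complex.I * (α : ℂ)) * (Complex.I - (α : ℂ)) =
          Complex.I * ((1 + α ^ 2 : ℝ) : ℂ) := by
        push_cast
        ring_nf
        rw [Complex.I_sq]
        ring
      calc (1 - Complex.I * (α : ℂ)) * ((Complex.I - (α : ℂ)) * W x / (1 + W x))
          = ((1 - Complex.I * (α : ℂ)) * (Complex.I - (α : ℂ))) * (W x / (1 + W x)) := by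
            ring
        _ = Complex.I * ((1 + α ^ 2 : ℝ) : ℂ) * (W x / (1 + W x)) := by rw [hc]
    rw [key]
    have hnsq : 0 < Complex.normSq (1 + W x) := Complex.normSq_pos.mpr hune
    have hdiv : (W x / (1 + W x)).im = (W x).im / Complex.normSq (1 + W x) := by
      rw [Complex.div_im]
      simp only [Complex.add_re, Complex.add_im, Complex.one_re, Complex.one_im]
      field_simp
      ring
    have hrepart : (Complex.I * ((1 + α ^ 2 : ℝ) : ℂ) * (W x / (1 + W x))).re =
        -((1 + α ^ 2) * (W x / (1 + W x)).im) := by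
      simp [Complex.mul_re, Complex.mul_im, pow_two]
    rw [hrepart, hdiv]
    have himpos : 0 < (W x).im := by
      rw [hWim]
      exact mul_pos (Real.exp_pos _) (Real.sin_pos_of_pos_of_lt_pi hx0 hxπ)
    have h1a : (0:ℝ) < 1 + α ^ 2 := by positivity
    exact neg_lt_zero.mpr (mul_pos h1a (div_pos himpos hnsq))

end QSSSAux

theorem q_SSS_congruence (q : ℝ) (hq : 0 < q) (z₁ z₂ z₁' z₂' : ℂ)
    (h₁ : InUpperU z₁) (h₂ : InUpperU z₂) (h₁' : InUpperU z₁') (h₂' : InUpperU z₂')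
    (hφ : phase z₁ ≤ phase z₂) (hφ' : phase z₁' ≤ phase z₂')
    (e₁ : qLen q z₁ = qLen q z₁') (e₂ : qLen q z₂ = qLen q z₂')
    (e₁₂ : qLen q (z₁ + z₂) = qLen q (z₁' + z₂')) :
    z₂ * z₁' = z₂' * z₁ := by
  open QSSSAux in
  have hπ := Real.pi_pos
  obtain ⟨a10, a1π, hz1⟩ := mem_arg h₁
  obtain ⟨a20, a2π, hz2⟩ := mem_arg h₂
  obtain ⟨b10, b1π, hz1'⟩ := mem_arg h₁'
  obtain ⟨b20, b2π, hz2'⟩ := mem_arg h₂'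
  obtain ⟨s0, sπ, hzs⟩ := mem_arg (inU_add h₁ h₂)
  obtain ⟨s0', sπ', hzs'⟩ := mem_arg (inU_add h₁' h₂')
  -- arg comparisons from phase
  have harg : z₁.arg ≤ z₂.arg := by
    unfold phase at hφ
    exact (div_le_div_iff_of_pos_right hπ).mp hφ
  have harg' : z₁'.arg ≤ z₂'.arg := by
    unfold phase at hφ'
    exact (div_le_div_iff_of_pos_right hπ).mp hφ'
  -- log-length equalities
  have hL1 : L q z₁ = L q z₁' := by
    rw [qLen_eq_exp hq hz1, qLen_eq_exp hq hz1'] at e₁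
    exact Real.exp_injective e₁
  have hL2 : L q z₂ = L q z₂' := by
    rw [qLen_eq_exp hq hz2, qLen_eq_exp hq hz2'] at e₂
    exact Real.exp_injective e₂
  have hL12 : L q (z₁ + z₂) = L q (z₁' + z₂') := by
    rw [qLen_eq_exp hq hzs, qLen_eq_exp hq hzs'] at e₁₂
    exact Real.exp_injective e₁₂
  set α := Real.log q / Real.pi with hαdef
  set d := L q z₂ - L q z₁ with hd
  -- the ratio w
  set w := z₂ / z₁ with hwdef
  set w' := z₂' / z₁' with hwdef'
  have hw0 : w ≠ 0 := div_ne_zero hz2 hz1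
  have hw0' : w' ≠ 0 := div_ne_zero hz2' hz1'
  have hargw : w.arg = z₂.arg - z₁.arg :=
    arg_div_of hz2 hz1 (by linarith) (by linarith)
  have hargw' : w'.arg = z₂'.arg - z₁'.arg :=
    arg_div_of hz2' hz1' (by linarith) (by linarith)
  have hwa0 : 0 ≤ w.arg := by rw [hargw]; linarith
  have hwaπ : w.arg < Real.pi := by rw [hargw]; linarith
  have hwa0' : 0 ≤ w'.arg := by rw [hargw']; linarith
  have hwaπ' : w'.arg < Real.pi := by rw [hargw']; linarith
  have hwU : InUpperU w := inU_of_arg hw0 hwa0 hwaπ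
  have hwU' : InUpperU w' := inU_of_arg hw0' hwa0' hwaπ'
  obtain ⟨c0, cπ, h1w0⟩ := mem_arg (inU_add inU_one hwU)
  obtain ⟨c0', cπ', h1w0'⟩ := mem_arg (inU_add inU_one hwU')
  have hmul : z₁ * (1 + w) = z₁ + z₂ := by
    rw [hwdef]; field_simp
  have hmul' : z₁' * (1 + w') = z₁' + z₂' := by
    rw [hwdef']; field_simp
  have hargmul : (z₁ * (1 + w)).arg = z₁.arg + (1 + w).arg := by
    refine arg_mul_of hz1 h1w0 a10 a1π c0 cπ ?_ ?_ <;> rw [hmul]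
    · exact s0
    · exact sπ
  have hargmul' : (z₁' * (1 + w')).arg = z₁'.arg + (1 + w').arg := by
    refine arg_mul_of hz1' h1w0' b10 b1π c0' cπ' ?_ ?_ <;> rw [hmul']
    · exact s0'
    · exact sπ'
  have hLsum : L q (z₁ + z₂) = L q z₁ + L q (1 + w) := by
    rw [← hmul]; exact L_mul hz1 h1w0 hargmul
  have hLsum' : L q (z₁' + z₂') = L q z₁' + L q (1 + w') := by
    rw [← hmul']; exact L_mul hz1' h1w0' hargmul'
  have hL1w : L q (1 + w) = L q (1 + w') := by linarith
  -- exponential form of w and w'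
  have hLw : L q w = d := by
    rw [hd]
    unfold w
    unfold L
    rw [norm_div, Real.log_div (norm_ne_zero_iff.mpr hz2) (norm_ne_zero_iff.mpr hz1),
      hargw]
    ring
  have hLw' : L q w' = d := by
    rw [hd, hL1, hL2]
    unfold w'
    unfold L
    rw [norm_div, Real.log_div (norm_ne_zero_iff.mpr hz2') (norm_ne_zero_iff.mpr hz1'),
      hargw']
    ring
  have hexp : ∀ (u : ℂ), u ≠ 0 → L q u = d →
      u = Complex.exp ((d : ℂ) + (Complex.I - (α : ℂ)) * (u.arg : ℂ)) := by
    intro u hu hLu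
    have habs : (‖u‖ : ℝ) = Real.exp (d - α * u.arg) := by
      rw [← hLu]
      have h1 : L q u - α * u.arg = Real.log ‖u‖ := by
        unfold L; rw [← hαdef]; ring
      rw [h1, Real.exp_log (norm_pos_iff.mpr hu)]
    conv_lhs => rw [← Complex.norm_mul_exp_arg_mul_I u]
    rw [habs, Complex.ofReal_exp, ← Complex.exp_add]
    congr 1
    push_cast
    ring
  have hwexp := hexp w hw0 hLw
  have hwexp' := hexp w' hw0' hLw'
  -- the real-part identity
  have hGeq : ∀ u : ℂ, ((1 - Complex.I * (α : ℂ)) * Complex.log u).re =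
      Real.log ‖u‖ + α * u.arg := by
    intro u
    rw [Complex.mul_re]
    simp [Complex.log_re, Complex.log_im]
  -- apply injectivity of the core strictly antitone map
  have hinj := (core α d).injOn
  have hargeq : w.arg = w'.arg := by
    refine hinj ⟨hwa0, hwaπ⟩ ⟨hwa0', hwaπ'⟩ ?_
    show ((1 - Complex.I * (α : ℂ)) *
        Complex.log (1 + Complex.exp ((d : ℂ) + (Complex.I - (α : ℂ)) * (w.arg : ℂ)))).re =
      ((1 - Complex.I * (α : ℂ)) *
        Complex.log (1 + Complex.exp ((d : ℂ) + (Complex.I - (α : ℂ)) * (w'.arg : ℂ)))).re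
    rw [← hwexp, ← hwexp', hGeq, hGeq]
    have e1 : Real.log ‖1 + w‖ + α * (1 + w).arg = L q (1 + w) := by
      unfold L; rw [← hαdef]
    have e2 : Real.log ‖1 + w'‖ + α * (1 + w').arg = L q (1 + w') := by
      unfold L; rw [← hαdef]
    rw [e1, e2, hL1w]
  have hweq : w = w' := by rw [hwexp, hwexp', hargeq]
  have : z₂ / z₁ = z₂' / z₁' := hweq
  rw [div_eq_div_iff hz1 hz1'] at this
  exact this
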